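/- Let φ : A → B be an involutive n-homomorphism between C*-algebras with n = 2k+1 odd, k ≥ 1. Then for every a ∈ A, σ((φ(a)*φ(a))^k) ⊆ σ((a*a)^k) ∪ {0}. -/

import Mathlib

/-- Product of a nonempty list: `nuProd x [a₁, …, aₘ] = x * a₁ * ⋯ * aₘ`. -/
def nuProd {α : Type*} [Mul α] (x : α) (l : List α) : α := l.foldl (· * ·) x

namespace OddNhomAux

variable {α β : Type*}

lemma nuProd_nil [Mul α] (x : α) : nuProd x [] = x := rfl

lemma nuProd_cons [Mul α] (x y : α) (l : List α) :
    nuProd x (y :: l) = nuProd (x * y) l := rfl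

lemma nuProd_append [Mul α] (x : α) (l₁ l₂ : List α) :
    nuProd x (l₁ ++ l₂) = nuProd (nuProd x l₁) l₂ :=
  List.foldl_append

lemma nuProd_concat [Mul α] (x v : α) (l : List α) :
    nuProd x (l ++ [v]) = nuProd x l * v := by
  rw [nuProd_append]; rfl

lemma mul_nuProd [Semigroup α] (z x : α) (l : List α) :
    z * nuProd x l = nuProd (z * x) l := by
  induction l generalizing x with
  | nil => rfl
  | cons y l ih => rw [nuProd_cons, nuProd_cons, ih, mul_assoc]

lemma smul_nuProd {R : Type*} [Mul α] [SMul R α] [IsScalarTower R α α]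
    (r : R) (x : α) (l : List α) :
    nuProd (r • x) l = r • nuProd x l := by
  induction l generalizing x with
  | nil => rfl
  | cons y l ih => rw [nuProd_cons, smul_mul_assoc, ih, nuProd_cons]

lemma sub_nuProd [NonUnitalNonAssocRing α] (x y : α) (l : List α) :
    nuProd (x - y) l = nuProd x l - nuProd y l := by
  induction l generalizing x y with
  | nil => rfl
  | cons e l ih => rw [nuProd_cons, sub_mul, ih, nuProd_cons, nuProd_cons]

lemma add_nuProd [NonUnitalNonAssocRing α] (x y : α) (l : List α) :
    nuProd (x + y) l = nuProd x l + nuProd y l := by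
  induction l generalizing x y with
  | nil => rfl
  | cons e l ih => rw [nuProd_cons, add_mul, ih, nuProd_cons, nuProd_cons]

lemma map_nuProd [Mul α] [Mul β] (F : α → β) (hF : ∀ p q, F (p * q) = F p * F q)
    (x : α) (l : List α) : F (nuProd x l) = nuProd (F x) (l.map F) := by
  induction l generalizing x with
  | nil => rfl
  | cons e l ih => rw [nuProd_cons, ih, hF, List.map_cons, nuProd_cons]

/-- `rep2 m p q = [p, q, p, q, …]` with `m` pairs. -/
def rep2 : ℕ → α → α → List α
  | 0, _, _ => []
  | n + 1, p, q => p :: q :: rep2 n p q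

lemma rep2_length (m : ℕ) (p q : α) : (rep2 m p q).length = 2 * m := by
  induction m with
  | zero => rfl
  | succ n ih =>
      show (p :: q :: rep2 n p q).length = 2 * (n + 1)
      simp only [List.length_cons, ih]
      omega

lemma rep2_map (F : α → β) (m : ℕ) (p q : α) :
    (rep2 m p q).map F = rep2 m (F p) (F q) := by
  induction m with
  | zero => rfl
  | succ n ih =>
      show F p :: F q :: (rep2 n p q).map F = _
      rw [ih]; rfl

lemma nuProd_rep2 {M : Type*} [Monoid M] (m : ℕ) (x p q : M) :
    nuProd x (rep2 m p q) = x * (p * q) ^ m := by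
  induction m generalizing x with
  | zero => rw [pow_zero, mul_one]; rfl
  | succ n ih =>
      show nuProd ((x * p) * q) (rep2 n p q) = _
      rw [ih, mul_assoc x p q, mul_assoc x (p * q), ← pow_succ']

lemma word_pow {M : Type*} [Monoid M] (m : ℕ) (p q : M) :
    q * (p * q) ^ m * p = (q * p) ^ (m + 1) := by
  induction m with
  | zero => rw [pow_zero, mul_one, pow_one]
  | succ n ih =>
      rw [pow_succ' (p * q) n]
      have h : q * ((p * q) * (p * q) ^ n) * p = (q * p) * (q * (p * q) ^ n * p) := by
        simp only [mul_assoc]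
      rw [h, ih, ← pow_succ']

/-- transfer `hmul` (stated with `List.ofFn`) to arbitrary lists of the right length -/
lemma nuProd_map_of_ofFn {n : ℕ} [Mul α] [Mul β] (g : α → β)
    (hg : ∀ (x : α) (f : Fin n → α),
      g (nuProd x (List.ofFn f)) = nuProd (g x) (List.ofFn fun i => g (f i)))
    (l : List α) (hl : l.length = n) (x : α) :
    g (nuProd x l) = nuProd (g x) (l.map g) := by
  subst hl
  have h1 := hg x (fun i => l[(i : ℕ)])
  rwa [List.ofFn_getElem, List.ofFn_getElem_eq_map] at h1

lemma inr_nuProd (R : Type*) {A : Type*} [Semiring R] [AddCommMonoid A] [Mul A]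
    [SMulWithZero R A] (x : A) (l : List A) :
    (↑(nuProd x l) : Unitization R A)
      = nuProd (↑x : Unitization R A) (l.map (Unitization.inr : A → Unitization R A)) :=
  map_nuProd _ (fun p q => Unitization.inr_mul R p q) x l

end OddNhomAux

open OddNhomAux in
/-- For an involutive `n`-homomorphism `φ` between C*-algebras with `n = 2k+1` odd,
`σ((φ(a)*φ(a))^k) ⊆ σ((a*a)^k) ∪ {0}` (spectra in the unitizations). -/
theorem odd_nhom_spectrum_subset {A B : Type*}
    [NonUnitalNormedRing A] [StarRing A] [CStarRing A] [CompleteSpace A]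
    [NormedSpace ℂ A] [IsScalarTower ℂ A A] [SMulCommClass ℂ A A] [StarModule ℂ A]
    [NonUnitalNormedRing B] [StarRing B] [CStarRing B] [CompleteSpace B]
    [NormedSpace ℂ B] [IsScalarTower ℂ B B] [SMulCommClass ℂ B B] [StarModule ℂ B]
    (k : ℕ) (hk : 1 ≤ k) (φ : A →ₗ[ℂ] B)
    (hmul : ∀ (x : A) (f : Fin (2 * k) → A),
      φ (nuProd x (List.ofFn f)) = nuProd (φ x) (List.ofFn fun i => φ (f i)))
    (hstar : ∀ a : A, φ (star a) = star (φ a)) :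
    ∀ a : A,
      spectrum ℂ (((star (φ a) * φ a : B) : Unitization ℂ B) ^ k) ⊆
        spectrum ℂ (((star a * a : A) : Unitization ℂ A) ^ k) ∪ {0} := by
  -- list form of the multiplicativity hypothesis
  have Hm : ∀ (l : List A), l.length = 2 * k → ∀ x : A,
      φ (nuProd x l) = nuProd (φ x) (l.map φ) := by
    intro l hl x
    exact nuProd_map_of_ofFn (fun y => φ y) (fun y f => hmul y f) l hl x
  -- multiplying a (2k)-fold product of φ-images by one more φ-image collapses
  have claim1 : ∀ (x' : A) (lx' : List A), lx'.length = 2 * k - 1 → ∀ v : A,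
      nuProd (φ x') (lx'.map φ) * φ v = φ (nuProd x' lx' * v) := by
    intro x' lx' hlx' v
    have hlen : (lx' ++ [v]).length = 2 * k := by
      simp only [List.length_append, List.length_singleton, hlx']
      omega
    have h1 : nuProd (φ x') (lx'.map φ) * φ v = nuProd (φ x') ((lx' ++ [v]).map φ) := by
      rw [List.map_append, List.map_singleton, nuProd_concat]
    rw [h1, ← Hm (lx' ++ [v]) hlen x', nuProd_concat]
  -- products of 2k images of φ only depend on the product of the preimages
  have keyB : ∀ (x y : A) (lx ly : List A), lx.length = 2 * k - 1 → ly.length = 2 * k - 1 →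
      nuProd x lx = nuProd y ly →
      nuProd (φ x) (lx.map φ) = nuProd (φ y) (ly.map φ) := by
    intro x y lx ly hlx hly hprod
    set P₁ := nuProd (φ x) (lx.map φ) with hP₁
    set P₂ := nuProd (φ y) (ly.map φ) with hP₂
    have hzero : ∀ v : A, (P₁ - P₂) * φ v = 0 := by
      intro v
      rw [sub_mul, hP₁, hP₂, claim1 x lx hlx v, claim1 y ly hly v, hprod, sub_self]
    have hstarP : ∀ (x' : A) (lx' : List A), lx'.length = 2 * k - 1 →
        ∃ (e : A) (Q : B), star (nuProd (φ x') (lx'.map φ)) = φ (star e) * Q := by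
      intro x' lx' h
      rcases List.eq_nil_or_concat lx' with h0 | ⟨L, e, rfl⟩
      · exfalso; rw [h0] at h; simp at h; omega
      · refine ⟨e, star (nuProd (φ x') (L.map φ)), ?_⟩
        rw [List.concat_eq_append, List.map_append, List.map_singleton,
          nuProd_concat, star_mul, hstar]
    obtain ⟨e₁, Q₁, hQ₁⟩ := hstarP x lx hlx
    obtain ⟨e₂, Q₂, hQ₂⟩ := hstarP y ly hly
    have hΔΔ : (P₁ - P₂) * star (P₁ - P₂) = 0 := by
      rw [star_sub, mul_sub, hQ₁, hQ₂, ← mul_assoc, ← mul_assoc,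
        hzero (star e₁), hzero (star e₂), zero_mul, zero_mul, sub_self]
    have hnorm : ‖P₁ - P₂‖ * ‖P₁ - P₂‖ = 0 := by
      rw [← CStarRing.norm_self_mul_star, hΔΔ, norm_zero]
    have hfin : P₁ - P₂ = 0 := norm_eq_zero.mp (mul_self_eq_zero.mp hnorm)
    exact sub_eq_zero.mp hfin
  -- main argument
  obtain ⟨m, rfl⟩ : ∃ m, k = m + 1 := ⟨k - 1, by omega⟩
  intro a z hz
  by_contra hcon
  have hz0 : z ≠ 0 := fun h => hcon (Or.inr (by simp [h]))
  set T : Unitization ℂ A := ((star a * a : A) : Unitization ℂ A) ^ (m + 1) with hT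
  set Λ : Unitization ℂ A := (algebraMap ℂ (Unitization ℂ A)) z with hΛ
  have hA : IsUnit (Λ - T) := spectrum.notMem_iff.mp (fun h => hcon (Or.inl h))
  set V : Unitization ℂ A := ↑hA.unit⁻¹ with hVdef
  have hV1 : (Λ - T) * V = 1 := by
    have h := hA.unit.mul_inv
    rw [hA.unit_spec] at h
    rw [hVdef]
    exact h
  have hV2 : V * (Λ - T) = 1 := by
    have h := hA.unit.inv_mul
    rw [hA.unit_spec] at h
    rw [hVdef]
    exact h
  have hcommΛT : Λ * T = T * Λ := by rw [hΛ]; exact Algebra.commutes z T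
  have hcommΛV : Λ * V = V * Λ := by rw [hΛ]; exact Algebra.commutes z V
  have hΛmul : ∀ x : A, Λ * (↑x : Unitization ℂ A) = ↑(z • x) := by
    intro x
    rw [hΛ, Unitization.algebraMap_eq_inl]
    exact Unitization.inl_mul_inr z x
  have hTcomm : (Λ - T) * T = T * (Λ - T) := by
    rw [sub_mul, mul_sub, hcommΛT]
  have hVT : V * T = T * V := by
    calc V * T = V * (T * ((Λ - T) * V)) := by rw [hV1, mul_one]
    _ = V * ((T * (Λ - T)) * V) := by rw [mul_assoc T]
    _ = V * (((Λ - T) * T) * V) := by rw [hTcomm]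
    _ = (V * (Λ - T)) * (T * V) := by simp only [mul_assoc]
    _ = T * V := by rw [hV2, one_mul]
  -- the element a * V of the unitization lies in A
  set aV : A := (↑a * V : Unitization ℂ A).snd with haVdef
  have hav : (↑aV : Unitization ℂ A) = ↑a * V := by
    have h0 : (↑a * V : Unitization ℂ A).fst = 0 := by
      rw [Unitization.fst_mul, Unitization.fst_inr, zero_mul]
    conv_rhs => rw [← Unitization.inl_fst_add_inr_snd_eq (↑a * V : Unitization ℂ A)]
    rw [h0, Unitization.inl_zero, zero_add, haVdef]
  -- lists
  set J : List A := rep2 m a (star a) with hJ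
  set Ta : List A := J ++ [a] with hTa
  set Tr : List A := J ++ [aV] with hTr
  have hlenTa : Ta.length = 2 * (m + 1) - 1 := by
    rw [hTa, List.length_append, hJ, rep2_length]
    simp; omega
  have hlenTr : Tr.length = 2 * (m + 1) - 1 := by
    rw [hTr, List.length_append, hJ, rep2_length]
    simp; omega
  set τ : A := nuProd (star a) Ta with hτdef
  set ρ : A := nuProd (star a) Tr with hρdef
  -- coercion computations
  have hcoeTa : ∀ x : A, ((nuProd x Ta : A) : Unitization ℂ A)
      = ((↑x : Unitization ℂ A)
          * ((↑a : Unitization ℂ A) * (↑(star a) : Unitization ℂ A)) ^ m)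
        * (↑a : Unitization ℂ A) := by
    intro x
    rw [inr_nuProd ℂ, hTa, List.map_append, List.map_singleton, nuProd_concat, hJ,
      rep2_map, nuProd_rep2]
  have hcoeTr : ∀ x : A, ((nuProd x Tr : A) : Unitization ℂ A)
      = ((↑x : Unitization ℂ A)
          * ((↑a : Unitization ℂ A) * (↑(star a) : Unitization ℂ A)) ^ m)
        * ((↑a : Unitization ℂ A) * V) := by
    intro x
    rw [inr_nuProd ℂ, hTr, List.map_append, List.map_singleton, nuProd_concat, hJ,
      rep2_map, nuProd_rep2, hav]
  have hword : ((↑(star a) : Unitization ℂ A)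
      * ((↑a : Unitization ℂ A) * (↑(star a) : Unitization ℂ A)) ^ m)
      * (↑a : Unitization ℂ A) = T := by
    rw [word_pow, hT, ← Unitization.inr_mul ℂ]
  have hword' : (↑(star a) : Unitization ℂ A)
      * (((↑a : Unitization ℂ A) * (↑(star a) : Unitization ℂ A)) ^ m
          * (↑a : Unitization ℂ A)) = T := by
    rw [← mul_assoc]; exact hword
  have hτcoe : ((τ : A) : Unitization ℂ A) = T := by
    rw [hτdef, hcoeTa (star a), hword]
  have hρcoe : ((ρ : A) : Unitization ℂ A) = T * V := by
    rw [hρdef, hcoeTr (star a)]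
    calc ((↑(star a) : Unitization ℂ A)
          * ((↑a : Unitization ℂ A) * (↑(star a) : Unitization ℂ A)) ^ m)
          * ((↑a : Unitization ℂ A) * V)
        = ((↑(star a) : Unitization ℂ A)
            * (((↑a : Unitization ℂ A) * (↑(star a) : Unitization ℂ A)) ^ m
              * (↑a : Unitization ℂ A))) * V := by simp only [mul_assoc]
    _ = T * V := by rw [hword']
  -- A-side identities
  have hI1A : nuProd (z • star a - τ * star a) Tr = nuProd (star a) Ta := by
    apply Unitization.inr_injective (R := ℂ)
    rw [hcoeTr, hcoeTa, hword]
    have hsub : ((z • star a - τ * star a : A) : Unitization ℂ A)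
        = (Λ - T) * (↑(star a) : Unitization ℂ A) := by
      rw [Unitization.inr_sub ℂ, Unitization.inr_mul ℂ, hτcoe, sub_mul,
        ← hΛmul (star a)]
    rw [hsub]
    calc ((Λ - T) * (↑(star a) : Unitization ℂ A)
          * ((↑a : Unitization ℂ A) * (↑(star a) : Unitization ℂ A)) ^ m)
          * ((↑a : Unitization ℂ A) * V)
        = (Λ - T) * ((↑(star a) : Unitization ℂ A)
            * (((↑a : Unitization ℂ A) * (↑(star a) : Unitization ℂ A)) ^ m
              * (↑a : Unitization ℂ A))) * V := by simp only [mul_assoc]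
    _ = ((Λ - T) * T) * V := by rw [hword']
    _ = T * ((Λ - T) * V) := by rw [hTcomm, mul_assoc]
    _ = T := by rw [hV1, mul_one]
  have hI2A : nuProd (z • star a) Tr = nuProd (star a + ρ * star a) Ta := by
    apply Unitization.inr_injective (R := ℂ)
    rw [hcoeTr, hcoeTa]
    have h1 : ((z • star a : A) : Unitization ℂ A)
        = Λ * (↑(star a) : Unitization ℂ A) := (hΛmul (star a)).symm
    have h2 : ((star a + ρ * star a : A) : Unitization ℂ A)
        = (↑(star a) : Unitization ℂ A) + T * V * (↑(star a) : Unitization ℂ A) := by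
      rw [Unitization.inr_add, Unitization.inr_mul ℂ, hρcoe]
    have hVΛ : V * Λ = 1 + V * T := by
      have h := hV2
      rw [mul_sub] at h
      rw [← h]; abel
    rw [h1, h2]
    calc (Λ * (↑(star a) : Unitization ℂ A)
          * ((↑a : Unitization ℂ A) * (↑(star a) : Unitization ℂ A)) ^ m)
          * ((↑a : Unitization ℂ A) * V)
        = Λ * ((↑(star a) : Unitization ℂ A)
            * (((↑a : Unitization ℂ A) * (↑(star a) : Unitization ℂ A)) ^ m
              * (↑a : Unitization ℂ A))) * V := by simp only [mul_assoc]
    _ = (Λ * T) * V := by rw [hword']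
    _ = T * (V * Λ) := by rw [hcommΛT, mul_assoc, hcommΛV]
    _ = T + T * (V * T) := by rw [hVΛ, mul_add, mul_one]
    _ = ((↑(star a) : Unitization ℂ A)
          + T * V * (↑(star a) : Unitization ℂ A))
          * ((↑a : Unitization ℂ A) * (↑(star a) : Unitization ℂ A)) ^ m
          * (↑a : Unitization ℂ A) := by
        rw [add_mul, add_mul]
        have e1 : (↑(star a) : Unitization ℂ A)
            * ((↑a : Unitization ℂ A) * (↑(star a) : Unitization ℂ A)) ^ m
            * (↑a : Unitization ℂ A) = T := hword
        have e2 : T * V * (↑(star a) : Unitization ℂ A)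
            * ((↑a : Unitization ℂ A) * (↑(star a) : Unitization ℂ A)) ^ m
            * (↑a : Unitization ℂ A) = T * (V * T) := by
          calc T * V * (↑(star a) : Unitization ℂ A)
              * ((↑a : Unitization ℂ A) * (↑(star a) : Unitization ℂ A)) ^ m
              * (↑a : Unitization ℂ A)
              = T * (V * ((↑(star a) : Unitization ℂ A)
                * (((↑a : Unitization ℂ A) * (↑(star a) : Unitization ℂ A)) ^ m
                  * (↑a : Unitization ℂ A)))) := by simp only [mul_assoc]
          _ = T * (V * T) := by rw [hword']
        rw [e1, e2]
  -- B-side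
  set S : B := nuProd (φ (star a)) (Ta.map φ) with hSdef
  set R : B := nuProd (φ (star a)) (Tr.map φ) with hRdef
  have hzR : z • R = nuProd (φ (z • star a)) (Tr.map φ) := by
    rw [hRdef, ← smul_nuProd, ← map_smul]
  have hI1B : z • R - S * R = S := by
    have hSR : S * R = nuProd (φ (τ * star a)) (Tr.map φ) := by
      rw [hRdef, mul_nuProd, hSdef, claim1 (star a) Ta hlenTa (star a), ← hτdef]
    rw [hzR, hSR, ← sub_nuProd, ← map_sub,
      keyB (z • star a - τ * star a) (star a) Tr Ta hlenTr hlenTa hI1A]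
  have hI2B : z • R - R * S = S := by
    have hRS : R * S = nuProd (φ (ρ * star a)) (Ta.map φ) := by
      rw [hSdef, mul_nuProd, hRdef, claim1 (star a) Tr hlenTr (star a), ← hρdef]
    have h5 : z • R = S + R * S := by
      rw [hzR, hRS, hSdef, ← add_nuProd, ← map_add]
      exact keyB (z • star a) (star a + ρ * star a) Tr Ta hlenTr hlenTa hI2A
    rw [h5]
    abel
  -- the coercion of S
  have hScoe : ((S : B) : Unitization ℂ B)
      = ((star (φ a) * φ a : B) : Unitization ℂ B) ^ (m + 1) := by
    rw [hSdef, inr_nuProd ℂ, hTa, List.map_append, List.map_singleton,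
      List.map_append, List.map_singleton, nuProd_concat, hJ, rep2_map, rep2_map,
      nuProd_rep2, word_pow, ← Unitization.inr_mul ℂ, hstar]
  -- build the inverse of ΛB - ↑S
  set ΛB : Unitization ℂ B := (algebraMap ℂ (Unitization ℂ B)) z with hΛB
  have hΛBmul : ∀ x : B, ΛB * (↑x : Unitization ℂ B) = ↑(z • x) := by
    intro x
    rw [hΛB, Unitization.algebraMap_eq_inl]
    exact Unitization.inl_mul_inr z x
  have hmulΛB : ∀ x : B, (↑x : Unitization ℂ B) * ΛB = ↑(z • x) := by
    intro x
    rw [hΛB, Unitization.algebraMap_eq_inl]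
    exact Unitization.inr_mul_inl z x
  set Y : Unitization ℂ B := (algebraMap ℂ (Unitization ℂ B)) z⁻¹ * (1 + ↑R) with hY
  have hmain1 : (ΛB - ↑S) * Y = 1 := by
    rw [hY, ← mul_assoc, ← Algebra.commutes z⁻¹ (ΛB - (↑S : Unitization ℂ B)), mul_assoc]
    have h3 : (ΛB - ↑S) * (1 + (↑R : Unitization ℂ B)) = ΛB := by
      rw [mul_add, mul_one, sub_mul]
      have h2 : (↑S : Unitization ℂ B) * ↑R = ((S * R : B) : Unitization ℂ B) :=
        (Unitization.inr_mul ℂ S R).symm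
      rw [hΛBmul R, h2, ← Unitization.inr_sub ℂ, hI1B]
      abel
    rw [h3, hΛB, ← map_mul, inv_mul_cancel₀ hz0, map_one]
  have hmain2 : Y * (ΛB - ↑S) = 1 := by
    rw [hY, mul_assoc]
    have h3 : (1 + (↑R : Unitization ℂ B)) * (ΛB - ↑S) = ΛB := by
      rw [add_mul, one_mul, mul_sub]
      have h2 : (↑R : Unitization ℂ B) * ↑S = ((R * S : B) : Unitization ℂ B) :=
        (Unitization.inr_mul ℂ R S).symm
      rw [hmulΛB R, h2, ← Unitization.inr_sub ℂ, hI2B]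
      abel
    rw [h3, hΛB, ← map_mul, inv_mul_cancel₀ hz0, map_one]
  have hUnitB : IsUnit (ΛB - (↑S : Unitization ℂ B)) :=
    isUnit_iff_exists.mpr ⟨Y, hmain1, hmain2⟩
  rw [hScoe] at hUnitB
  exact (spectrum.mem_iff.mp hz) hUnitB
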